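/- If each of N independent mechanisms A_i is a Gaussian mechanism A_i(D_i) = f_i(D_i) + ξ_i with ξ_i ∼ N(0, σ_i² I_d) and the f_i have ℓ₂-sensitivity at most C (only one client's data differs between neighboring global datasets), then the aggregate Σ_i A_i(D_i) is (ε, δ)-DP whenever the single Gaussian mechanism with sensitivity C and noise variance Σ_i σ_i² is (ε, δ)-DP. In particular the aggregate achieves strictly better privacy than any individual client's local mechanism when N ≥ 2 and all σ_i > 0. -/

import Mathlib

open MeasureTheory ProbabilityTheory
open scoped ENNReal NNReal

open Real Set in
lemma pdf_conv_pt {v w : NNReal} (hv : v ≠ 0) (hw : w ≠ 0) (t x : ℝ) :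
    gaussianPDFReal 0 v x * gaussianPDFReal 0 w (t - x)
      = gaussianPDFReal 0 (v + w) t * gaussianPDFReal ((v : ℝ) * t / ((v : ℝ) + w)) (v * w / (v + w)) x := by
  have hv' : (0:ℝ) < v := lt_of_le_of_ne v.coe_nonneg (by exact_mod_cast (Ne.symm hv))
  have hw' : (0:ℝ) < w := lt_of_le_of_ne w.coe_nonneg (by exact_mod_cast (Ne.symm hw))
  have hvw : (0:ℝ) < (v:ℝ) + w := by linarith
  have hu : ((v * w / (v + w) : NNReal) : ℝ) = (v:ℝ) * w / ((v:ℝ) + w) := by push_cast; ring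
  have hpi : (0:ℝ) < π := Real.pi_pos
  unfold gaussianPDFReal
  rw [hu]
  push_cast
  rw [mul_mul_mul_comm, mul_mul_mul_comm ((√(2 * π * ((v:ℝ)+w)))⁻¹)]
  congr 1
  · rw [← mul_inv, ← mul_inv, ← Real.sqrt_mul (by positivity), ← Real.sqrt_mul (by positivity)]
    congr 1
    field_simp
  · rw [← Real.exp_add, ← Real.exp_add]
    congr 1
    field_simp
    ring

/-- Hockey-stick divergence `H_α(P‖Q) = E_{t∼Q}[max(dP/dQ(t) − α, 0)]`. -/
noncomputable def hsDiv {O : Type*} [MeasurableSpace O] (α : ℝ) (P Q : Measure O) : ℝ :=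
  ∫ t, max ((P.rnDeriv Q t).toReal - α) 0 ∂Q

/-- Isotropic Gaussian `N(0, v·I_d)` on `ℝ^d` (as a Euclidean space). -/
noncomputable def isoGauss (d : ℕ) (v : NNReal) : Measure (EuclideanSpace ℝ (Fin d)) :=
  (Measure.pi (fun _ : Fin d => gaussianReal 0 v) : Measure (Fin d → ℝ)).map
    (EuclideanSpace.equiv (Fin d) ℝ).symm

open Real Set in
lemma gauss_conv {v w : NNReal} (hv : v ≠ 0) (hw : w ≠ 0) :
    ((gaussianReal 0 v).prod (gaussianReal 0 w)).map (fun p : ℝ × ℝ => p.1 + p.2)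
      = gaussianReal 0 (v + w) := by
  have hvw : v + w ≠ 0 := by simp [hv]
  have hu : v * w / (v + w) ≠ 0 := by
    simp [div_eq_zero_iff, hv, hw, hvw]
  ext s hs
  rw [Measure.map_apply (by fun_prop) hs, gaussianReal_apply _ hvw s]
  have h1 : ((gaussianReal 0 v).prod (gaussianReal 0 w)) ((fun p : ℝ × ℝ => p.1 + p.2) ⁻¹' s)
      = ∫⁻ x, gaussianReal x w s ∂(gaussianReal 0 v) := by
    rw [Measure.prod_apply (by exact measurable_add hs)]
    congr 1
    ext x
    have : Prod.mk x ⁻¹' ((fun p : ℝ × ℝ => p.1 + p.2) ⁻¹' s) = (fun y => x + y) ⁻¹' s := rfl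
    rw [this, ← Measure.map_apply (by fun_prop) hs, gaussianReal_map_const_add, zero_add]
  rw [h1]
  have h2 : ∀ x, gaussianReal x w s = ∫⁻ t in s, ENNReal.ofReal (gaussianPDFReal 0 w (t - x)) := by
    intro x
    rw [gaussianReal_apply _ hw s]
    congr 1
    ext t
    rw [gaussianPDF]
    congr 1
    rw [gaussianPDFReal_sub]
    norm_num [gaussianPDFReal]
  simp_rw [h2]
  rw [gaussianReal_of_var_ne_zero _ hv, lintegral_withDensity_eq_lintegral_mul _
    (measurable_gaussianPDF _ _)
    (Measurable.lintegral_prod_right (f := fun x t => ENNReal.ofReal (gaussianPDFReal 0 w (t - x)))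
      (((measurable_gaussianPDFReal 0 w).comp (measurable_snd.sub measurable_fst)).ennreal_ofReal) )]
  simp only [Pi.mul_apply]
  have hne : ∀ a : ℝ, gaussianPDF 0 v a ≠ ⊤ := fun a => ENNReal.ofReal_ne_top
  have step : ∀ a : ℝ, gaussianPDF 0 v a * ∫⁻ t in s, ENNReal.ofReal (gaussianPDFReal 0 w (t - a)) = ∫⁻ t in s, gaussianPDF 0 v a * ENNReal.ofReal (gaussianPDFReal 0 w (t - a)) := fun a => (lintegral_const_mul' _ _ (hne a)).symm
  simp_rw [step]
  rw [lintegral_lintegral_swap]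
  · apply setLIntegral_congr_fun hs
    intro t _
    have key : ∀ x : ℝ, gaussianPDF 0 v x * ENNReal.ofReal (gaussianPDFReal 0 w (t - x))
        = ENNReal.ofReal (gaussianPDFReal 0 (v+w) t)
          * ENNReal.ofReal (gaussianPDFReal ((v : ℝ) * t / ((v : ℝ) + w)) (v * w / (v + w)) x) := by
      intro x
      rw [gaussianPDF, ← ENNReal.ofReal_mul (gaussianPDFReal_nonneg _ _ _), pdf_conv_pt hv hw,
        ENNReal.ofReal_mul (gaussianPDFReal_nonneg _ _ _)]
    simp_rw [key]
    rw [lintegral_const_mul' _ _ ENNReal.ofReal_ne_top]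
    have : ∫⁻ x, ENNReal.ofReal (gaussianPDFReal ((v : ℝ) * t / ((v : ℝ) + w)) (v * w / (v + w)) x) = 1 :=
      lintegral_gaussianPDF_eq_one _ hu
    rw [this, mul_one, gaussianPDF]
  · apply Measurable.aemeasurable
    exact ((measurable_gaussianPDF 0 v).comp measurable_fst).mul
      (((measurable_gaussianPDFReal 0 w).comp (measurable_snd.sub measurable_fst)).ennreal_ofReal)

open Real Set in
noncomputable def eqd (d : ℕ) : (Fin d → ℝ) ≃ᵐ EuclideanSpace ℝ (Fin d) :=
  ((EuclideanSpace.equiv (Fin d) ℝ).toHomeomorph.toMeasurableEquiv).symm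

lemma eqd_coe (d : ℕ) : ⇑(eqd d) = ⇑(EuclideanSpace.equiv (Fin d) ℝ).symm := rfl

lemma eqd_add (d : ℕ) (x y : Fin d → ℝ) : eqd d (x + y) = eqd d x + eqd d y := rfl

lemma isoGauss_eq (d : ℕ) (v : NNReal) :
    isoGauss d v = (Measure.pi fun _ : Fin d => gaussianReal 0 v).map (eqd d) := rfl

lemma isoGauss_conv (d : ℕ) {v w : NNReal} (hv : v ≠ 0) (hw : w ≠ 0) :
    ((isoGauss d v).prod (isoGauss d w)).map
        (fun p : EuclideanSpace ℝ (Fin d) × EuclideanSpace ℝ (Fin d) => p.1 + p.2)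
      = isoGauss d (v + w) := by
  have hadd : Measurable (fun p : EuclideanSpace ℝ (Fin d) × EuclideanSpace ℝ (Fin d) => p.1 + p.2) :=
    measurable_add
  have hsum : Measurable (fun x : Fin d → ℝ × ℝ => fun j => (x j).1 + (x j).2) :=
    measurable_pi_iff.mpr fun j => ((measurable_pi_apply j).fst).add ((measurable_pi_apply j).snd)
  rw [isoGauss_eq, isoGauss_eq, isoGauss_eq,
    Measure.map_prod_map _ _ (eqd d).measurable (eqd d).measurable,
    ← (measurePreserving_arrowProdEquivProdArrow ℝ ℝ (Fin d)
        (fun _ => gaussianReal 0 v) (fun _ => gaussianReal 0 w)).map_eq,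
    Measure.map_map ((eqd d).measurable.prodMap (eqd d).measurable) (MeasurableEquiv.measurable _),
    Measure.map_map hadd (((eqd d).measurable.prodMap (eqd d).measurable).comp (MeasurableEquiv.measurable _))]
  have hfun : ((fun p : EuclideanSpace ℝ (Fin d) × EuclideanSpace ℝ (Fin d) => p.1 + p.2)
      ∘ Prod.map (eqd d) (eqd d) ∘ (MeasurableEquiv.arrowProdEquivProdArrow ℝ ℝ (Fin d)))
      = (eqd d) ∘ (fun x : Fin d → ℝ × ℝ => fun j => (x j).1 + (x j).2) := by
    funext x
    rfl
  rw [hfun, ← Measure.map_map (eqd d).measurable hsum,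
    (measurePreserving_pi (fun _ : Fin d => (gaussianReal 0 v).prod (gaussianReal 0 w))
      (fun _ : Fin d => gaussianReal 0 (v + w))
      (fun _ => ⟨measurable_add, gauss_conv hv hw⟩)).map_eq]

open Real Set in
instance (d : ℕ) (v : NNReal) : IsProbabilityMeasure (isoGauss d v) := by
  rw [isoGauss_eq]; exact Measure.isProbabilityMeasure_map (eqd d).measurable.aemeasurable

lemma measurable_sumFin {d n : ℕ} :
    Measurable (fun x : Fin n → EuclideanSpace ℝ (Fin d) => ∑ i, x i) :=
  Finset.univ.measurable_sum fun i _ => measurable_pi_apply i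

lemma isoGauss_sum (d : ℕ) : ∀ (n : ℕ) (v : Fin (n+1) → NNReal), (∀ i, v i ≠ 0) →
    (Measure.pi fun i => isoGauss d (v i)).map
        (fun x : Fin (n+1) → EuclideanSpace ℝ (Fin d) => ∑ i, x i)
      = isoGauss d (∑ i, v i) := by
  intro n
  induction n with
  | zero =>
    intro v hv
    have h1 : (fun x : Fin 1 → EuclideanSpace ℝ (Fin d) => ∑ i, x i)
        = ⇑(MeasurableEquiv.piUnique fun _ : Fin 1 => EuclideanSpace ℝ (Fin d)) := by
      funext x
      simp [MeasurableEquiv.piUnique, Fin.sum_univ_one]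
    rw [h1, (measurePreserving_piUnique fun i : Fin 1 => isoGauss d (v i)).map_eq]
    simp [Fin.sum_univ_one]
  | succ n ih =>
    intro v hv
    have htail : ∑ j : Fin (n+1), v ((0 : Fin (n+2)).succAbove j) ≠ 0 := by
      intro h
      rw [Finset.sum_eq_zero_iff] at h
      exact hv _ (h 0 (Finset.mem_univ _))
    have hpm := (measurePreserving_piFinSuccAbove
      (fun i : Fin (n+2) => isoGauss d (v i)) 0).symm
    rw [← hpm.map_eq, Measure.map_map measurable_sumFin (MeasurableEquiv.measurable _)]
    have hcomp : ((fun x : Fin (n+2) → EuclideanSpace ℝ (Fin d) => ∑ i, x i)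
        ∘ ⇑(MeasurableEquiv.piFinSuccAbove (fun _ : Fin (n+2) => EuclideanSpace ℝ (Fin d)) 0).symm)
        = (fun p : EuclideanSpace ℝ (Fin d) × (Fin (n+1) → EuclideanSpace ℝ (Fin d)) =>
            p.1 + ∑ j, p.2 j) := by
      funext p
      simp only [Function.comp_apply, MeasurableEquiv.piFinSuccAbove_symm_apply]
      rw [Fin.sum_univ_succAbove _ 0]
      simp
    rw [hcomp]
    have hsplit : (fun p : EuclideanSpace ℝ (Fin d) × (Fin (n+1) → EuclideanSpace ℝ (Fin d)) =>
          p.1 + ∑ j, p.2 j)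
        = (fun q : EuclideanSpace ℝ (Fin d) × EuclideanSpace ℝ (Fin d) => q.1 + q.2)
          ∘ (Prod.map id (fun y : Fin (n+1) → EuclideanSpace ℝ (Fin d) => ∑ j, y j)) := rfl
    rw [hsplit, ← Measure.map_map measurable_add (measurable_id.prodMap measurable_sumFin),
      ← Measure.map_prod_map _ _ measurable_id measurable_sumFin, Measure.map_id,
      ih _ (fun j => hv _), isoGauss_conv d (hv 0) htail, Fin.sum_univ_succAbove v 0]

open Real Set in
lemma shift_sum (d n : ℕ) (v : Fin (n+1) → NNReal) (hv : ∀ i, v i ≠ 0)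
    (a : Fin (n+1) → EuclideanSpace ℝ (Fin d)) :
    (Measure.pi fun i => isoGauss d (v i)).map
        (fun x : Fin (n+1) → EuclideanSpace ℝ (Fin d) => ∑ i, (a i + x i))
      = (isoGauss d (∑ i, v i)).map (fun y => (∑ i, a i) + y) := by
  have h1 : (fun x : Fin (n+1) → EuclideanSpace ℝ (Fin d) => ∑ i, (a i + x i))
      = (fun y => (∑ i, a i) + y) ∘ (fun x => ∑ i, x i) := by
    funext x
    simp [Finset.sum_add_distrib]
  rw [h1, ← Measure.map_map (measurable_const_add _) measurable_sumFin, isoGauss_sum d n v hv]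


section Part2Lemmas
open Real Set
variable {C α : ℝ} {v : NNReal}

lemma pdfP_eq_L_mul (hv : v ≠ 0) (t : ℝ) :
    gaussianPDFReal 0 v t
      = rexp ((C^2 - 2*C*t)/(2*(v:ℝ))) * gaussianPDFReal C v t := by
  have hv' : (0:ℝ) < v := lt_of_le_of_ne v.coe_nonneg (by exact_mod_cast (Ne.symm hv))
  unfold gaussianPDFReal
  rw [mul_comm (rexp _)]
  conv_rhs => rw [mul_assoc, ← Real.exp_add]
  congr 1
  field_simp
  ring

lemma gauss_rnDeriv (hv : v ≠ 0) :
    (gaussianReal 0 v).rnDeriv (gaussianReal C v)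
      =ᵐ[gaussianReal C v] fun t => ENNReal.ofReal (rexp ((C^2 - 2*C*t)/(2*(v:ℝ)))) := by
  have hL : Measurable fun t : ℝ => rexp ((C^2 - 2*C*t)/(2*(v:ℝ))) := by fun_prop
  have key : gaussianReal 0 v
      = (gaussianReal C v).withDensity (fun t => ENNReal.ofReal (rexp ((C^2 - 2*C*t)/(2*(v:ℝ))))) := by
    rw [gaussianReal_of_var_ne_zero _ hv, gaussianReal_of_var_ne_zero _ hv,
      ← withDensity_mul _ (measurable_gaussianPDF _ _) hL.ennreal_ofReal]
    congr 1
    funext t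
    rw [Pi.mul_apply, gaussianPDF, gaussianPDF,
      ← ENNReal.ofReal_mul (gaussianPDFReal_nonneg _ _ _)]
    congr 1
    rw [mul_comm]
    exact pdfP_eq_L_mul (C := C) hv t
  rw [key]
  exact Measure.rnDeriv_withDensity _ hL.ennreal_ofReal

lemma hsDiv_gauss_eq (hC : 0 < C) (hα : 0 < α) (hv : v ≠ 0) :
    hsDiv α (gaussianReal 0 v) (gaussianReal C v)
      = ((gaussianReal 0 v) (Iic (C/2 - (v:ℝ) * Real.log α / C))).toReal
        - α * ((gaussianReal C v) (Iic (C/2 - (v:ℝ) * Real.log α / C))).toReal := by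
  have hv' : (0:ℝ) < v := lt_of_le_of_ne v.coe_nonneg (by exact_mod_cast (Ne.symm hv))
  set T : ℝ := C/2 - (v:ℝ) * Real.log α / C with hT
  set L : ℝ → ℝ := fun t => rexp ((C^2 - 2*C*t)/(2*(v:ℝ))) with hLdef
  have hL : Measurable L := by fun_prop
  have h1 : hsDiv α (gaussianReal 0 v) (gaussianReal C v)
      = ∫ t, max (L t - α) 0 ∂(gaussianReal C v) := by
    refine integral_congr_ae ?_
    filter_upwards [gauss_rnDeriv (C := C) hv] with t ht
    rw [ht, ENNReal.toReal_ofReal (Real.exp_nonneg _)]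
  rw [h1, gaussianReal_of_var_ne_zero _ hv]
  have h2 : (gaussianPDF C v) = fun x => ((gaussianPDFReal C v x).toNNReal : ℝ≥0∞) := rfl
  rw [h2, integral_withDensity_eq_integral_smul
    ((measurable_gaussianPDFReal C v).real_toNNReal) _]
  have key : ∀ t : ℝ, t ≤ T ↔ 2*(v:ℝ)*Real.log α ≤ C^2 - 2*C*t := by
    intro t
    rw [hT, show C/2 - (v:ℝ)*Real.log α/C = (C^2 - 2*(v:ℝ)*Real.log α)/(2*C) by field_simp,
      le_div_iff₀ (by positivity)]
    constructor <;> intro h <;> linarith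
  have h3 : (fun t => (gaussianPDFReal C v t).toNNReal • max (L t - α) 0)
      = Set.indicator (Iic T) (fun t => gaussianPDFReal 0 v t - α * gaussianPDFReal C v t) := by
    funext t
    have hsmul : (gaussianPDFReal C v t).toNNReal • max (L t - α) 0
        = gaussianPDFReal C v t * max (L t - α) 0 := by
      rw [NNReal.smul_def, smul_eq_mul, Real.coe_toNNReal _ (gaussianPDFReal_nonneg _ _ _)]
    rw [hsmul]
    by_cases ht : t ∈ Iic T
    · have hLt : α ≤ L t := by
        rw [hLdef]
        simp only []
        rw [← Real.exp_log hα, Real.exp_le_exp, le_div_iff₀ (by positivity)]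
        have := (key t).mp (mem_Iic.mp ht)
        linarith
      rw [Set.indicator_of_mem ht, max_eq_left (by linarith), pdfP_eq_L_mul (C := C) hv t]
      ring
    · have ht' : ¬ t ≤ T := fun h => ht (mem_Iic.mpr h)
      have hnot := (not_iff_not.mpr (key t)).mp ht'
      push_neg at hnot
      have hLt : L t ≤ α := by
        rw [hLdef]
        simp only []
        conv_rhs => rw [← Real.exp_log hα]
        rw [Real.exp_le_exp, div_le_iff₀ (by positivity)]
        linarith
      rw [Set.indicator_of_notMem ht, max_eq_right (by linarith)]
      ring
  rw [h3, integral_indicator measurableSet_Iic, integral_sub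
    ((integrable_gaussianPDFReal 0 v).restrict)
    (((integrable_gaussianPDFReal C v).restrict).const_mul α),
    MeasureTheory.integral_const_mul, ← h2, ← gaussianReal_of_var_ne_zero C hv, gaussianReal_apply_eq_integral _ hv, gaussianReal_apply_eq_integral _ hv,
    ENNReal.toReal_ofReal (setIntegral_nonneg measurableSet_Iic
      (fun t _ => gaussianPDFReal_nonneg _ _ _)),
    ENNReal.toReal_ofReal (setIntegral_nonneg measurableSet_Iic
      (fun t _ => gaussianPDFReal_nonneg _ _ _))]

noncomputable def stdCDF (x : ℝ) : ℝ := ((gaussianReal 0 1) (Iic x)).toReal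

lemma gauss_Iic_eq {v : NNReal} (hv : v ≠ 0) (m T : ℝ) :
    (gaussianReal m v) (Iic T) = (gaussianReal 0 1) (Iic ((T - m)/Real.sqrt v)) := by
  have hv' : (0:ℝ) < v := lt_of_le_of_ne v.coe_nonneg (by exact_mod_cast (Ne.symm hv))
  have hsv : (0:ℝ) < Real.sqrt v := Real.sqrt_pos.mpr hv'
  have h1 : gaussianReal m v = ((gaussianReal 0 1).map (Real.sqrt v * ·)).map (· + m) := by
    rw [gaussianReal_map_const_mul, gaussianReal_map_add_const]
    congr 1
    · ring
    · apply NNReal.eq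
      push_cast
      rw [mul_one]
      exact (Real.sq_sqrt v.coe_nonneg).symm
  rw [h1, Measure.map_apply (by fun_prop) measurableSet_Iic]
  have h2 : (· + m) ⁻¹' (Iic T) = Iic (T - m) := by
    ext x; simp [le_sub_iff_add_le]
  rw [h2, Measure.map_apply (by fun_prop) measurableSet_Iic]
  congr 1
  ext x
  simp only [mem_preimage, mem_Iic]
  rw [le_div_iff₀ hsv, mul_comm]

lemma hs_formula {C α : ℝ} (hC : 0 < C) (hα : 0 < α) {s : ℝ} (hs : 0 < s) :
    hsDiv α (gaussianReal 0 ⟨s^2, sq_nonneg _⟩) (gaussianReal C ⟨s^2, sq_nonneg _⟩)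
      = stdCDF (C/(2*s) - s * Real.log α / C)
        - α * stdCDF (-C/(2*s) - s * Real.log α / C) := by
  have hv : (⟨s^2, sq_nonneg _⟩ : NNReal) ≠ 0 := by
    intro h
    have : ((⟨s^2, sq_nonneg _⟩ : NNReal) : ℝ) = 0 := by rw [h]; simp
    simp only [NNReal.coe_mk] at this
    nlinarith
  rw [hsDiv_gauss_eq hC hα hv, gauss_Iic_eq hv, gauss_Iic_eq hv]
  have hcoe : ((⟨s^2, sq_nonneg _⟩ : NNReal) : ℝ) = s^2 := rfl
  rw [stdCDF, stdCDF]
  have hsq : Real.sqrt ((⟨s^2, sq_nonneg _⟩ : NNReal) : ℝ) = s := by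
    rw [hcoe, Real.sqrt_sq hs.le]
  change ((gaussianReal 0 1) (Iic ((C/2 - s^2 * Real.log α / C - 0) / Real.sqrt (s^2)))).toReal
    - α * ((gaussianReal 0 1) (Iic ((C/2 - s^2 * Real.log α / C - C) / Real.sqrt (s^2)))).toReal = _
  rw [Real.sqrt_sq hs.le]
  congr 3
  · field_simp
    ring
  · field_simp
    ring

lemma continuous_pdf : Continuous (gaussianPDFReal 0 1) := by
  unfold gaussianPDFReal
  fun_prop

lemma stdCDF_eq (x : ℝ) : stdCDF x = ∫ t in Iic x, gaussianPDFReal 0 1 t := by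
  rw [stdCDF, gaussianReal_apply_eq_integral 0 one_ne_zero,
    ENNReal.toReal_ofReal (setIntegral_nonneg measurableSet_Iic
      (fun t _ => gaussianPDFReal_nonneg _ _ _))]

lemma stdCDF_hasDeriv (x : ℝ) : HasDerivAt stdCDF (gaussianPDFReal 0 1 x) x := by
  have heq : stdCDF = fun y => (∫ t in (0:ℝ)..y, gaussianPDFReal 0 1 t)
      + ∫ t in Iic (0:ℝ), gaussianPDFReal 0 1 t := by
    funext y
    rw [stdCDF_eq, ← intervalIntegral.integral_Iic_sub_Iic ((integrable_gaussianPDFReal 0 1).restrict)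
      ((integrable_gaussianPDFReal 0 1).restrict)]
    ring
  rw [heq]
  exact (intervalIntegral.integral_hasDerivAt_right
    ((continuous_pdf.intervalIntegrable 0 x))
    (continuous_pdf.stronglyMeasurableAtFilter _ _)
    continuous_pdf.continuousAt).add_const _

lemma pdf_ratio {α C s : ℝ} (hα : 0 < α) (hC : 0 < C) (hs : 0 < s) :
    α * gaussianPDFReal 0 1 (-C/(2*s) - s * Real.log α / C)
      = gaussianPDFReal 0 1 (C/(2*s) - s * Real.log α / C) := by
  have hab : (C/(2*s) - s * Real.log α / C)^2
      = (-C/(2*s) - s * Real.log α / C)^2 - 2*Real.log α := by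
    field_simp
    ring
  unfold gaussianPDFReal
  rw [← mul_assoc, mul_comm α, mul_assoc,
    show α * rexp (- (-C/(2*s) - s * Real.log α / C - 0)^2 / (2*(1:NNReal)))
      = rexp (Real.log α + - (-C/(2*s) - s * Real.log α / C - 0)^2 / (2*(1:NNReal))) by
        rw [Real.exp_add, Real.exp_log hα]]
  congr 1
  rw [Real.exp_eq_exp]
  simp only [NNReal.coe_one, mul_one, sub_zero]
  linarith [hab]

lemma G_strictAnti {C α : ℝ} (hC : 0 < C) (hα : 0 < α) :
    StrictAntiOn (fun s : ℝ => stdCDF (C/(2*s) - s * Real.log α / C)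
      - α * stdCDF (-C/(2*s) - s * Real.log α / C)) (Ioi 0) := by
  set lg := Real.log α with hlg
  have hderiv : ∀ s ∈ Ioi (0:ℝ), HasDerivAt (fun s : ℝ => stdCDF (C/(2*s) - s*lg/C)
      - α * stdCDF (-C/(2*s) - s*lg/C))
      (gaussianPDFReal 0 1 (C/(2*s) - s*lg/C) * (-C/s^2)) s := by
    intro s hs
    rw [mem_Ioi] at hs
    have hinv : HasDerivAt (fun u : ℝ => u⁻¹) (-(s^2)⁻¹) s := by
      simpa using hasDerivAt_inv hs.ne'
    have h1 : HasDerivAt (fun u : ℝ => C/(2*u)) (-C/(2*s^2)) s := by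
      have h := hinv.const_mul (C/2)
      have hf : (fun u : ℝ => C/2 * u⁻¹) = fun u : ℝ => C/(2*u) := by
        funext u
        rw [div_eq_mul_inv, div_eq_mul_inv, mul_inv]
        ring
      rw [hf] at h
      exact h.congr_deriv (by ring)
    have h2 : HasDerivAt (fun u : ℝ => u * lg / C) (lg / C) s := by
      have h := (hasDerivAt_id s).mul_const (lg/C)
      simp only [one_mul] at h
      have hf : (fun u : ℝ => id u * (lg/C)) = fun u : ℝ => u * lg / C := by
        funext u
        simp [mul_div_assoc]
      rwa [hf] at h
    have ha : HasDerivAt (fun u : ℝ => C/(2*u) - u*lg/C) (-C/(2*s^2) - lg/C) s := h1.sub h2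
    have hb : HasDerivAt (fun u : ℝ => -C/(2*u) - u*lg/C) (C/(2*s^2) - lg/C) s := by
      have h3 : HasDerivAt (fun u : ℝ => -C/(2*u)) (C/(2*s^2)) s := by
        have h := h1.neg
        have hf : (fun u : ℝ => -(C/(2*u))) = fun u : ℝ => -C/(2*u) := by
          funext u
          ring
        rw [show (-fun u : ℝ => C/(2*u)) = fun u : ℝ => -C/(2*u) from by
          funext u; simp only [Pi.neg_apply]; ring] at h
        exact h.congr_deriv (by ring)
      exact h3.sub h2
    have hA := (stdCDF_hasDeriv (C/(2*s) - s*lg/C)).comp s ha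
    have hB := ((stdCDF_hasDeriv (-C/(2*s) - s*lg/C)).comp s hb).const_mul α
    have hfull := hA.sub hB
    have hval : gaussianPDFReal 0 1 (C/(2*s) - s*lg/C) * (-C/(2*s^2) - lg/C)
        - α * (gaussianPDFReal 0 1 (-C/(2*s) - s*lg/C) * (C/(2*s^2) - lg/C))
        = gaussianPDFReal 0 1 (C/(2*s) - s*lg/C) * (-C/s^2) := by
      rw [hlg, ← mul_assoc α, pdf_ratio hα hC hs, ← mul_sub]
      congr 1
      field_simp
      ring
    rw [hval] at hfull
    exact hfull
  apply strictAntiOn_of_deriv_neg (convex_Ioi 0)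
  · intro x hx
    exact ((hderiv x hx).continuousAt).continuousWithinAt
  · intro x hx
    rw [interior_Ioi] at hx
    rw [(hderiv x hx).deriv]
    have hpos := gaussianPDFReal_pos 0 1 (C/(2*x) - x*lg/C) one_ne_zero
    have hx' := mem_Ioi.mp hx
    have : -C/x^2 < 0 := by
      apply div_neg_of_neg_of_pos <;> [linarith; positivity]
    exact mul_neg_of_pos_of_neg hpos this

lemma hsDiv_gauss_strict {C α : ℝ} (hC : 0 < C) (hα : 0 < α) {s1 s2 : ℝ}
    (h1 : 0 < s1) (h12 : s1 < s2) :
    hsDiv α (gaussianReal 0 ⟨s2^2, sq_nonneg _⟩) (gaussianReal C ⟨s2^2, sq_nonneg _⟩)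
      < hsDiv α (gaussianReal 0 ⟨s1^2, sq_nonneg _⟩) (gaussianReal C ⟨s1^2, sq_nonneg _⟩) := by
  rw [hs_formula hC hα h1, hs_formula hC hα (h1.trans h12)]
  exact G_strictAnti hC hα (mem_Ioi.mpr h1) (mem_Ioi.mpr (h1.trans h12)) h12

end Part2Lemmas
/-- If each of `N` independent mechanisms is a Gaussian mechanism
`Aᵢ(Dᵢ) = fᵢ(Dᵢ) + ξᵢ`, `ξᵢ ∼ N(0, σᵢ² I_d)`, and neighbouring global datasets
differ only in one client `k`, with `‖f_k(D_k) − f_k(D'_k)‖₂ ≤ C`, then the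
aggregate `Σᵢ Aᵢ(Dᵢ)` is `(ε,δ)`-DP whenever the single Gaussian mechanism with
sensitivity `C` and noise variance `Σᵢ σᵢ²` is `(ε,δ)`-DP. In particular, for
`N ≥ 2` and all `σᵢ > 0`, the aggregate is strictly better (at the level of the
dominating-pair hockey-stick curve, i.e. strictly smaller `δ` for the same `ε`)
than any individual client's local mechanism with noise variance `σ_k²`. -/
theorem stmt_18 {Xc : Type*} (d N : ℕ) (C ε δ : ℝ) (hC : 0 < C)
    (σ : Fin N → ℝ) (hσ : ∀ i, 0 < σ i)
    (f : Fin N → Xc → EuclideanSpace ℝ (Fin d))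
    (Neigh : (Fin N → Xc) → (Fin N → Xc) → Prop)
    (hNeigh : ∀ D D', Neigh D D' →
      ∃ k, (∀ i, i ≠ k → D i = D' i) ∧ ‖f k (D k) - f k (D' k)‖ ≤ C)
    (hGauss : ∀ μ ν : EuclideanSpace ℝ (Fin d), ‖μ - ν‖ ≤ C →
      ∀ E : Set (EuclideanSpace ℝ (Fin d)), MeasurableSet E →
        (((isoGauss d ⟨∑ i, (σ i) ^ 2, by positivity⟩).map (fun x => μ + x)) E).toReal
          ≤ Real.exp ε *
              (((isoGauss d ⟨∑ i, (σ i) ^ 2, by positivity⟩).map (fun x => ν + x)) E).toReal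
            + δ) :
    (∀ D D', Neigh D D' → ∀ E : Set (EuclideanSpace ℝ (Fin d)), MeasurableSet E →
      ((Measure.map (fun x : Fin N → EuclideanSpace ℝ (Fin d) => ∑ i, (f i (D i) + x i))
          (Measure.pi (fun i => isoGauss d ⟨(σ i) ^ 2, sq_nonneg _⟩))) E).toReal
        ≤ Real.exp ε *
            ((Measure.map (fun x : Fin N → EuclideanSpace ℝ (Fin d) => ∑ i, (f i (D' i) + x i))
                (Measure.pi (fun i => isoGauss d ⟨(σ i) ^ 2, sq_nonneg _⟩))) E).toReal
          + δ)
    ∧ (2 ≤ N → ∀ k : Fin N,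
        hsDiv (Real.exp ε)
            (gaussianReal 0 ⟨∑ i, (σ i) ^ 2, by positivity⟩)
            (gaussianReal C ⟨∑ i, (σ i) ^ 2, by positivity⟩)
          < hsDiv (Real.exp ε)
              (gaussianReal 0 ⟨(σ k) ^ 2, sq_nonneg _⟩)
              (gaussianReal C ⟨(σ k) ^ 2, sq_nonneg _⟩)) := by
  constructor
  · intro D D' hDD' E hE
    obtain ⟨k, hk1, hk2⟩ := hNeigh D D' hDD'
    obtain ⟨m, rfl⟩ : ∃ m, N = m + 1 := ⟨N - 1, (Nat.succ_pred_eq_of_pos k.pos).symm⟩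
    have hv : ∀ i : Fin (m+1), (⟨(σ i) ^ 2, sq_nonneg _⟩ : NNReal) ≠ 0 := by
      intro i
      have := hσ i
      intro h
      have h2 : ((⟨(σ i) ^ 2, sq_nonneg _⟩ : NNReal) : ℝ) = 0 := by rw [h]; simp
      simp only [NNReal.coe_mk] at h2
      nlinarith
    have hvsum : (∑ i : Fin (m+1), (⟨(σ i) ^ 2, sq_nonneg _⟩ : NNReal))
        = ⟨∑ i, (σ i) ^ 2, by positivity⟩ := by
      apply NNReal.eq
      exact (NNReal.coe_sum _ _).trans rfl
    rw [shift_sum d m _ hv, shift_sum d m _ hv]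
    erw [hvsum]
    have hdiff : (∑ i, f i (D i)) - (∑ i, f i (D' i)) = f k (D k) - f k (D' k) := by
      rw [← Finset.sum_sub_distrib]
      exact Fintype.sum_eq_single k fun i hi => by rw [hk1 i hi, sub_self]
    have hnorm : ‖(∑ i, f i (D i)) - (∑ i, f i (D' i))‖ ≤ C := by rw [hdiff]; exact hk2
    exact hGauss _ _ hnorm E hE
  · intro hN k
    have hsum_pos : 0 < ∑ i, σ i ^ 2 :=
      Finset.sum_pos (fun i _ => by have := hσ i; positivity) ⟨k, Finset.mem_univ k⟩
    have hcard : 1 < Fintype.card (Fin N) := by simp; omega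
    obtain ⟨j, hj⟩ := Fintype.exists_ne_of_one_lt_card hcard k
    have hlt : σ k ^ 2 < ∑ i, σ i ^ 2 := by
      refine Finset.single_lt_sum (f := fun i => σ i ^ 2) hj (Finset.mem_univ k)
        (Finset.mem_univ j) ?_ (fun i _ _ => sq_nonneg _)
      have := hσ j
      positivity
    have hs2 : ((⟨∑ i, σ i ^ 2, by positivity⟩ : NNReal))
        = (⟨(Real.sqrt (∑ i, σ i ^ 2)) ^ 2, sq_nonneg _⟩ : NNReal) := by
      apply NNReal.eq
      simp [Real.sq_sqrt hsum_pos.le]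
    have hklt : σ k < Real.sqrt (∑ i, σ i ^ 2) := (Real.lt_sqrt (hσ k).le).mpr hlt
    rw [hs2]
    exact hsDiv_gauss_strict hC (Real.exp_pos ε) (hσ k) hklt
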